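/- arXiv:1207.3459 — 4 statements merged into one kernel-verified Lean document; each statement's English description precedes it below -/
import Mathlib

section
/- Let Π and G be groups and let Λ be a subgroup of Π × G. There exists a function φ : G → Π satisfying φ(g * h) = σ * φ(h) for every (σ, g) ∈ Λ and every h ∈ G, if and only if Λ ∩ (Π × {1}) is trivial (i.e. (σ, 1) ∈ Λ implies σ = 1). -/
/-- There is a function `φ : G → P` satisfying `φ (g * h) = σ * φ h` for every
`(σ, g) ∈ Λ` and every `h`, if and only if `Λ` meets `P × {1}` trivially. -/
theorem exists_twisted_function_iff {P G : Type*} [Group P] [Group G]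
    (Λ : Subgroup (P × G)) :
    (∃ φ : G → P, ∀ (σ : P) (g : G), (σ, g) ∈ Λ → ∀ h : G, φ (g * h) = σ * φ h) ↔
      (∀ σ : P, (σ, (1 : G)) ∈ Λ → σ = 1) := by
  constructor
  · rintro ⟨φ, hφ⟩ σ hσ
    have := hφ σ 1 hσ 1
    simpa using this
  · intro htriv
    -- uniqueness of σ over a given g
    have uniq : ∀ σ σ' g, (σ, g) ∈ Λ → (σ', g) ∈ Λ → σ = σ' := by
      intro σ σ' g h1 h2
      have : ((σ, g) * (σ', g)⁻¹ : P × G) ∈ Λ := Λ.mul_mem h1 (Λ.inv_mem h2)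
      have h3 : (σ * σ'⁻¹, (1 : G)) ∈ Λ := by simpa using this
      exact mul_inv_eq_one.mp (htriv _ h3)
    -- setoid: right cosets of the projection of Λ
    let s : Setoid G :=
      ⟨fun a b => ∃ σ : P, (σ, a * b⁻¹) ∈ Λ, by
        constructor
        · intro a; exact ⟨1, by rw [mul_inv_cancel]; exact Λ.one_mem⟩
        · rintro a b ⟨σ, hσ⟩
          refine ⟨σ⁻¹, ?_⟩
          have := Λ.inv_mem hσ
          simpa using this
        · rintro a b c ⟨σ, hσ⟩ ⟨τ, hτ⟩
          refine ⟨σ * τ, ?_⟩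
          have := Λ.mul_mem hσ hτ
          simpa [mul_assoc] using this⟩
    let rep : G → G := fun h => Quotient.out (Quotient.mk s h)
    have hrep : ∀ h, ∃ σ : P, (σ, h * (rep h)⁻¹) ∈ Λ := by
      intro h
      have : s.r (rep h) h := Quotient.exact (Quotient.out_eq (Quotient.mk s h))
      obtain ⟨σ, hσ⟩ := this
      refine ⟨σ⁻¹, ?_⟩
      have := Λ.inv_mem hσ
      simpa using this
    choose φ hφ using hrep
    refine ⟨φ, ?_⟩
    intro σ g hσ h
    have hrepeq : rep (g * h) = rep h := by
      have : Quotient.mk s (g * h) = Quotient.mk s h := by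
        apply Quotient.sound
        exact ⟨σ, by simpa using hσ⟩
      simp only [rep, this]
    have h1 : (φ (g * h), g * h * (rep h)⁻¹) ∈ Λ := by
      have := hφ (g * h); rwa [hrepeq] at this
    have h2 : (σ * φ h, g * h * (rep h)⁻¹) ∈ Λ := by
      have := Λ.mul_mem hσ (hφ h)
      simpa [mul_assoc] using this
    exact uniq _ _ _ h1 h2
end

section
/- Let G be a group acting on a type X and let j be a natural number. On pairs (φ, y), where φ : G → Perm(Fin j) and y : Fin j → X, define a right action of Perm(Fin j) by (φ, y) · σ = ((h ↦ φ(h) * σ), (i ↦ y(σ(i)))) and a left action of G by g · (φ, y) = ((h ↦ φ(g⁻¹ h)), (i ↦ g • y(i))); these two actions commute. Let α : G → Perm(Fin j) satisfy α(1) = 1 and let y : Fin j → X. Then the Perm(Fin j)-orbit of (α, y) is G-fixed — that is, for every g ∈ G there exists σ ∈ Perm(Fin j) with g · (α, y) = (α, y) · σ — if and only if α is an anti-homomorphism (α(g h) = α(h) * α(g) for all g, h) and g • y(i) = y(α(g⁻¹)(i)) for all g ∈ G and i ∈ Fin j. -/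
/-- The right action of `σ ∈ Perm (Fin j)` on pairs `(φ, y)`:
`(φ, y) · σ = ((h ↦ φ h * σ), (i ↦ y (σ i)))`. -/
def pairRightAct {G X : Type*} [Group G] {j : ℕ}
    (p : (G → Equiv.Perm (Fin j)) × (Fin j → X)) (σ : Equiv.Perm (Fin j)) :
    (G → Equiv.Perm (Fin j)) × (Fin j → X) :=
  ((fun h => p.1 h * σ), fun i => p.2 (σ i))

/-- The left action of `g ∈ G` on pairs `(φ, y)`:
`g · (φ, y) = ((h ↦ φ (g⁻¹ h)), (i ↦ g • y i))`. -/
def pairLeftAct {G X : Type*} [Group G] [MulAction G X] {j : ℕ} (g : G)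
    (p : (G → Equiv.Perm (Fin j)) × (Fin j → X)) :
    (G → Equiv.Perm (Fin j)) × (Fin j → X) :=
  ((fun h => p.1 (g⁻¹ * h)), fun i => g • p.2 i)

/-- The two actions commute, and for `α` with `α 1 = 1`, the `Perm (Fin j)`-orbit of
`(α, y)` is `G`-fixed if and only if `α` is an anti-homomorphism and
`g • y i = y (α g⁻¹ i)` for all `g, i`. -/
theorem orbit_fixed_iff {G X : Type*} [Group G] [MulAction G X] (j : ℕ) :
    (∀ (g : G) (p : (G → Equiv.Perm (Fin j)) × (Fin j → X)) (σ : Equiv.Perm (Fin j)),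
      pairLeftAct g (pairRightAct p σ) = pairRightAct (pairLeftAct g p) σ) ∧
    (∀ (α : G → Equiv.Perm (Fin j)) (y : Fin j → X), α 1 = 1 →
      ((∀ g : G, ∃ σ : Equiv.Perm (Fin j),
          pairLeftAct g (α, y) = pairRightAct (α, y) σ) ↔
        ((∀ g h : G, α (g * h) = α h * α g) ∧
          ∀ (g : G) (i : Fin j), g • y i = y (α g⁻¹ i)))) := by
  constructor
  · intro g p σ
    rfl
  · intro α y hα1
    constructor
    · intro hfix
      have key : ∀ g : G, (∀ h : G, α (g⁻¹ * h) = α h * (α g)⁻¹) ∧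
          (∀ i, g • y i = y ((α g)⁻¹ i)) := by
        intro g
        obtain ⟨σ, hσ⟩ := hfix g
        have h1 : (fun h => α (g⁻¹ * h)) = fun h => α h * σ := congrArg Prod.fst hσ
        have h2 : (fun i => g • y i) = fun i => y (σ i) := congrArg Prod.snd hσ
        have hg : α (g⁻¹ * g) = α g * σ := congrFun h1 g
        rw [inv_mul_cancel, hα1] at hg
        have hσval : σ = (α g)⁻¹ := (inv_eq_of_mul_eq_one_right hg.symm).symm
        subst hσval
        exact ⟨fun h => congrFun h1 h, fun i => congrFun h2 i⟩
      have hinv : ∀ g : G, α g⁻¹ = (α g)⁻¹ := by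
        intro g
        have := (key g).1 1
        rwa [mul_one, hα1, one_mul] at this
      refine ⟨fun g h => ?_, fun g i => ?_⟩
      · have := (key g⁻¹).1 h
        rwa [inv_inv, hinv, inv_inv] at this
      · rw [hinv]
        exact (key g).2 i
    · rintro ⟨hanti, hy⟩ g
      have hinv : ∀ g : G, α g⁻¹ = (α g)⁻¹ := by
        intro g
        have := hanti g g⁻¹
        rw [mul_inv_cancel, hα1] at this
        exact eq_inv_of_mul_eq_one_left this.symm
      refine ⟨α g⁻¹, Prod.ext (funext fun h => ?_) (funext fun i => ?_)⟩
      · show α (g⁻¹ * h) = α h * α g⁻¹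
        exact hanti g⁻¹ h
      · exact hy g i
end

section
/- Let G be a group acting on a type X and let j be a natural number. On pairs (φ, y), where φ : G → Perm(Fin j) and y : Fin j → X, define a right action of Perm(Fin j) by (φ, y) · σ = ((h ↦ φ(h) * σ), (i ↦ y(σ(i)))) and a left action of G by g · (φ, y) = ((h ↦ φ(g⁻¹ h)), (i ↦ g • y(i))); these actions commute, so G acts on the set of Perm(Fin j)-orbits. Then the assignment sending a pair (β, y), where β : G → Perm(Fin j) is a group homomorphism and y : Fin j → X satisfies y(β(g)(i)) = g • y(i) for all g and i, to the Perm(Fin j)-orbit of ((g ↦ β(g⁻¹)), y), is a bijection onto the set of G-fixed Perm(Fin j)-orbits. -/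
lemma pairRightAct_one {G X : Type*} [Group G] {j : ℕ}
    (p : (G → Equiv.Perm (Fin j)) × (Fin j → X)) : pairRightAct p 1 = p := by
  cases p; simp [pairRightAct]

lemma pairRightAct_mul {G X : Type*} [Group G] {j : ℕ}
    (p : (G → Equiv.Perm (Fin j)) × (Fin j → X)) (σ τ : Equiv.Perm (Fin j)) :
    pairRightAct (pairRightAct p σ) τ = pairRightAct p (σ * τ) := by
  cases p; simp [pairRightAct, mul_assoc]

/-- The setoid of `Perm (Fin j)`-orbits of pairs `(φ, y)`. -/
def pairSetoid (G X : Type*) [Group G] [MulAction G X] (j : ℕ) :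
    Setoid ((G → Equiv.Perm (Fin j)) × (Fin j → X)) where
  r p q := ∃ σ : Equiv.Perm (Fin j), pairRightAct p σ = q
  iseqv := by
    constructor
    · exact fun p => ⟨1, pairRightAct_one p⟩
    · rintro p q ⟨σ, rfl⟩
      exact ⟨σ⁻¹, by rw [pairRightAct_mul]; simp [pairRightAct_one]⟩
    · rintro p q r ⟨σ, rfl⟩ ⟨τ, rfl⟩
      exact ⟨σ * τ, (pairRightAct_mul p σ τ)⟩

lemma pairLeftAct_pairRightAct {G X : Type*} [Group G] [MulAction G X] {j : ℕ}
    (g : G) (p : (G → Equiv.Perm (Fin j)) × (Fin j → X)) (σ : Equiv.Perm (Fin j)) :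
    pairLeftAct g (pairRightAct p σ) = pairRightAct (pairLeftAct g p) σ := rfl

/-- Since the two actions commute, `G` acts on the set of `Perm (Fin j)`-orbits. -/
def pairLeftActOrbit {G X : Type*} [Group G] [MulAction G X] {j : ℕ} (g : G)
    (o : Quotient (pairSetoid G X j)) : Quotient (pairSetoid G X j) :=
  Quotient.liftOn o (fun p => Quotient.mk (pairSetoid G X j) (pairLeftAct g p))
    (fun p q hpq => Quotient.sound (by
      obtain ⟨σ, rfl⟩ := hpq
      exact ⟨σ, (pairLeftAct_pairRightAct g p σ).symm⟩))

/-- The assignment sending a pair `(β, y)`, where `β : G →* Perm (Fin j)` is a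
homomorphism and `y : Fin j → X` satisfies `y (β g i) = g • y i`, to the orbit of
`((g ↦ β g⁻¹), y)`, is a bijection onto the set of `G`-fixed orbits. -/
theorem orbits_of_G_sets_bijection (G X : Type*) [Group G] [MulAction G X] (j : ℕ) :
    Set.BijOn
      (fun p : {q : (G →* Equiv.Perm (Fin j)) × (Fin j → X) //
          ∀ (g : G) (i : Fin j), q.2 (q.1 g i) = g • q.2 i} =>
        Quotient.mk (pairSetoid G X j) ((fun g : G => p.1.1 g⁻¹), p.1.2))
      Set.univ
      {o : Quotient (pairSetoid G X j) | ∀ g : G, pairLeftActOrbit g o = o} := by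
  refine ⟨?_, ?_, ?_⟩
  · rintro ⟨⟨β, y⟩, hy⟩ - g
    refine Quotient.sound ⟨β g⁻¹, ?_⟩
    refine Prod.ext (funext fun h => ?_) (funext fun i => ?_)
    · show β (g⁻¹ * h)⁻¹ * β g⁻¹ = β h⁻¹
      rw [← map_mul]
      group
    · show g • y (β g⁻¹ i) = y i
      have h : y ((β g⁻¹) i) = g⁻¹ • y i := hy g⁻¹ i
      rw [h, smul_inv_smul]
  · rintro ⟨⟨β, y⟩, hy⟩ - ⟨⟨β', y'⟩, hy'⟩ - h
    obtain ⟨σ, hσ⟩ := Quotient.exact h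
    simp only [pairRightAct, Prod.mk.injEq] at hσ
    obtain ⟨h1, h2⟩ := hσ
    have hσ1 : σ = 1 := by
      have := congrFun h1 1
      simpa using this
    subst hσ1
    refine Subtype.ext (Prod.ext ?_ ?_)
    · ext g i
      have hg : β g = β' g := by simpa using congrFun h1 g⁻¹
      rw [hg]
    · funext i
      simpa using congrFun h2 i
  · rintro o ho
    obtain ⟨r, rfl⟩ := o.exists_rep
    set s : (G → Equiv.Perm (Fin j)) × (Fin j → X) := pairRightAct r (r.1 1)⁻¹ with hs
    have hos : Quotient.mk (pairSetoid G X j) r = Quotient.mk (pairSetoid G X j) s :=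
      Quotient.sound ⟨(r.1 1)⁻¹, rfl⟩
    have hs1 : s.1 1 = 1 := mul_inv_cancel (r.1 1)
    have key : ∀ g : G, ∃ σ : Equiv.Perm (Fin j),
        pairRightAct (pairLeftAct g s) σ = s := by
      intro g
      have := ho g
      rw [hos] at this
      exact Quotient.exact this
    have key2 : ∀ g : G, pairRightAct (pairLeftAct g s) (s.1 g⁻¹)⁻¹ = s := by
      intro g
      obtain ⟨σ, hσ⟩ := key g
      have h1 := congrFun (congrArg Prod.fst hσ) 1
      simp only [pairRightAct, pairLeftAct, mul_one, hs1] at h1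
      have : (s.1 g⁻¹)⁻¹ = σ := mul_eq_one_iff_inv_eq.mp h1
      rwa [← this] at hσ
    have hmul : ∀ a h : G, s.1 (a * h) = s.1 h * s.1 a := by
      intro a h
      have := congrFun (congrArg Prod.fst (key2 a⁻¹)) h
      simp only [pairRightAct, pairLeftAct, inv_inv] at this
      rw [← this]; group
    set β : G →* Equiv.Perm (Fin j) :=
      MonoidHom.mk' (fun g => s.1 g⁻¹) (by
        intro a b
        simp only [mul_inv_rev]
        rw [hmul]) with hβ
    have hy : ∀ (g : G) (i : Fin j), s.2 (β g i) = g • s.2 i := by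
      intro g i
      have := congrFun (congrArg Prod.snd (key2 g)) (β g i)
      simp only [pairRightAct, pairLeftAct] at this
      have h2 : (β g)⁻¹ (β g i) = i := by simp
      rw [← this]
      show g • s.2 ((s.1 g⁻¹)⁻¹ (β g i)) = _
      have : (s.1 g⁻¹)⁻¹ (β g i) = i := h2
      rw [this]
    refine ⟨⟨⟨β, s.2⟩, hy⟩, Set.mem_univ _, ?_⟩
    rw [hos]
    refine congrArg _ (Prod.ext (funext fun g => ?_) rfl)
    show s.1 g⁻¹⁻¹ = s.1 g
    rw [inv_inv]
end

section
/- Let G be a finite group and let X and Y be countable G-sets such that for every subgroup H of G, the set of orbits of X that are G-equivariantly bijective to G ⧸ H is infinite, and likewise for Y. Then there exists a G-equivariant bijection X ≃ Y. -/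
open MulAction

/-- The orbit of `x` is `G`-equivariantly bijective to the coset space `G ⧸ H`. -/
def OrbitIsoTo (G : Type*) [Group G] (H : Subgroup G) {X : Type*} [MulAction G X]
    (x : X) : Prop :=
  ∃ f : MulAction.orbit G x ≃ (G ⧸ H),
    ∀ (g : G) (y : MulAction.orbit G x), f (g • y) = g • f y

section Aux

variable (G : Type*) [Group G]

/-- Relation: quotients are equivariantly equivalent. -/
def SubgroupQuotRel (H K : Subgroup G) : Prop :=
  ∃ f : (G ⧸ H) ≃ (G ⧸ K), ∀ (g : G) (q : G ⧸ H), f (g • q) = g • f q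

theorem SubgroupQuotRel.refl (H : Subgroup G) : SubgroupQuotRel G H H :=
  ⟨Equiv.refl _, fun _ _ => rfl⟩

theorem SubgroupQuotRel.symm' {H K : Subgroup G} (h : SubgroupQuotRel G H K) :
    SubgroupQuotRel G K H := by
  obtain ⟨f, hf⟩ := h
  exact ⟨f.symm, fun g q => f.injective (by rw [Equiv.apply_symm_apply, hf, Equiv.apply_symm_apply])⟩

theorem SubgroupQuotRel.trans' {H K L : Subgroup G} (h1 : SubgroupQuotRel G H K)
    (h2 : SubgroupQuotRel G K L) : SubgroupQuotRel G H L := by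
  obtain ⟨f, hf⟩ := h1; obtain ⟨f', hf'⟩ := h2
  exact ⟨f.trans f', fun g q => by simp [hf, hf']⟩

/-- Setoid of subgroups up to equivariant quotient equivalence. -/
def subgroupQuotSetoid : Setoid (Subgroup G) :=
  ⟨SubgroupQuotRel G, ⟨SubgroupQuotRel.refl G, SubgroupQuotRel.symm' G, SubgroupQuotRel.trans' G⟩⟩

variable {G}
variable {X : Type*} [MulAction G X]

theorem orbitEquiv_equivariant (x : X) (g : G) (y : orbit G x) :
    orbitEquivQuotientStabilizer G x (g • y) = g • orbitEquivQuotientStabilizer G x y := by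
  set e := orbitEquivQuotientStabilizer G x with he
  have key : ∀ (g : G) (q : G ⧸ stabilizer G x), e.symm (g • q) = g • e.symm q := by
    intro g q
    induction q using QuotientGroup.induction_on with
    | H a =>
      apply Subtype.ext
      have h1 : g • ((a : G ⧸ stabilizer G x)) = ((g * a : G) : G ⧸ stabilizer G x) := by
        rw [MulAction.Quotient.smul_mk, smul_eq_mul]
      rw [h1]
      show ((e.symm ((g * a : G) : G ⧸ stabilizer G x) : orbit G x) : X) = _
      rw [MulAction.orbit.coe_smul]
      rw [he, MulAction.orbitEquivQuotientStabilizer_symm_apply,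
        MulAction.orbitEquivQuotientStabilizer_symm_apply, mul_smul]
  have := key g (e y)
  rw [Equiv.symm_apply_apply] at this
  rw [← this, Equiv.apply_symm_apply]

theorem orbitIsoTo_iff_rel (H : Subgroup G) (x : X) :
    OrbitIsoTo G H x ↔ SubgroupQuotRel G (stabilizer G x) H := by
  constructor
  · rintro ⟨f, hf⟩
    refine ⟨(orbitEquivQuotientStabilizer G x).symm.trans f, fun g q => ?_⟩
    simp only [Equiv.trans_apply]
    have : (orbitEquivQuotientStabilizer G x).symm (g • q)
        = g • (orbitEquivQuotientStabilizer G x).symm q := by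
      apply (orbitEquivQuotientStabilizer G x).injective
      rw [Equiv.apply_symm_apply, orbitEquiv_equivariant, Equiv.apply_symm_apply]
    rw [this, hf]
  · rintro ⟨f, hf⟩
    exact ⟨(orbitEquivQuotientStabilizer G x).trans f, fun g q => by
      simp only [Equiv.trans_apply, orbitEquiv_equivariant, hf]⟩

/-- Equivariant equivalence of orbits of points in the same orbit. -/
theorem orbitIsoTo_congr {x y : X} (h : x ∈ orbit G y) (H : Subgroup G) :
    OrbitIsoTo G H y → OrbitIsoTo G H x := by
  rintro ⟨f, hf⟩
  have heq : orbit G x = orbit G y := MulAction.orbit_eq_iff.2 h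
  refine ⟨(Equiv.setCongr heq).trans f, fun g z => ?_⟩
  simp only [Equiv.trans_apply]
  have : Equiv.setCongr heq (g • z) = g • Equiv.setCongr heq z := by
    apply Subtype.ext
    simp [MulAction.orbit.coe_smul]
  rw [this, hf]

end Aux

section Main

variable (G : Type*) [Group G] {X : Type*} [MulAction G X]

/-- The orbit-type map. -/
noncomputable def orbitType (ω : Quotient (MulAction.orbitRel G X)) :
    Quotient (subgroupQuotSetoid G) :=
  Quotient.mk (subgroupQuotSetoid G) (stabilizer G ω.out)

theorem orbitType_fiber (H : Subgroup G) :
    {ω : Quotient (MulAction.orbitRel G X) |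
        ∃ x : X, Quotient.mk (MulAction.orbitRel G X) x = ω ∧ OrbitIsoTo G H x}
      = {ω | orbitType G ω = Quotient.mk (subgroupQuotSetoid G) H} := by
  ext ω
  simp only [Set.mem_setOf_eq]
  constructor
  · rintro ⟨x, hx, hiso⟩
    have hrel : x ∈ orbit G ω.out := by
      have : Quotient.mk (MulAction.orbitRel G X) x
          = Quotient.mk (MulAction.orbitRel G X) ω.out := by rw [hx, Quotient.out_eq]
      exact Quotient.exact this
    have : OrbitIsoTo G H ω.out :=
      orbitIsoTo_congr (MulAction.mem_orbit_symm.1 hrel) H hiso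
    exact Quotient.sound ((orbitIsoTo_iff_rel H ω.out).1 this)
  · intro h
    refine ⟨ω.out, Quotient.out_eq ω, ?_⟩
    exact (orbitIsoTo_iff_rel H ω.out).2 (Quotient.exact h)

end Main

/-- Two countable `G`-sets (for a finite group `G`), each of which has infinitely many
orbits `G`-equivariantly bijective to `G ⧸ H` for every subgroup `H`, are
`G`-equivariantly bijective. -/
theorem countable_G_sets_with_infinitely_many_orbits_iso (G : Type*) [Group G]
    [Finite G] (X Y : Type*) [Countable X] [Countable Y] [MulAction G X]
    [MulAction G Y]
    (hX : ∀ H : Subgroup G,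
      {ω : Quotient (MulAction.orbitRel G X) |
        ∃ x : X, Quotient.mk (MulAction.orbitRel G X) x = ω ∧ OrbitIsoTo G H x}.Infinite)
    (hY : ∀ H : Subgroup G,
      {ω : Quotient (MulAction.orbitRel G Y) |
        ∃ y : Y, Quotient.mk (MulAction.orbitRel G Y) y = ω ∧ OrbitIsoTo G H y}.Infinite) :
    ∃ f : X ≃ Y, ∀ (g : G) (x : X), f (g • x) = g • f x := by
  classical
  set QX := Quotient (MulAction.orbitRel G X)
  set QY := Quotient (MulAction.orbitRel G Y)
  set τX : QX → Quotient (subgroupQuotSetoid G) := orbitType G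
  set τY : QY → Quotient (subgroupQuotSetoid G) := orbitType G
  -- fibers are infinite
  have hfibX : ∀ q, {ω : QX | τX ω = q}.Infinite := by
    intro q
    induction q using Quotient.inductionOn with
    | h H => have := hX H; rwa [orbitType_fiber G H] at this
  have hfibY : ∀ q, {ω : QY | τY ω = q}.Infinite := by
    intro q
    induction q using Quotient.inductionOn with
    | h H => have := hY H; rwa [orbitType_fiber G H] at this
  -- matching equivalence of fibers
  have key : ∀ q, Nonempty ({ω : QX // τX ω = q} ≃ {ω : QY // τY ω = q}) := by
    intro q
    haveI : Infinite {ω : QX // τX ω = q} := (hfibX q).to_subtype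
    haveI : Infinite {ω : QY // τY ω = q} := (hfibY q).to_subtype
    exact Cardinal.lift_mk_eq'.1 (by
      simp [Cardinal.mk_eq_aleph0 {ω : QX // τX ω = q},
        Cardinal.mk_eq_aleph0 {ω : QY // τY ω = q}])
  set matchEq : ∀ q, {ω : QX // τX ω = q} ≃ {ω : QY // τY ω = q} := fun q => (key q).some
  set e : QX ≃ QY :=
    (Equiv.sigmaFiberEquiv τX).symm.trans
      ((Equiv.sigmaCongrRight matchEq).trans (Equiv.sigmaFiberEquiv τY)) with he
  have hτ : ∀ ω : QX, τY (e ω) = τX ω := by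
    intro ω
    show τY ((matchEq (τX ω) ⟨ω, rfl⟩ : {ω' : QY // τY ω' = τX ω}) : QY) = τX ω
    exact (matchEq (τX ω) ⟨ω, rfl⟩).2
  -- equivariant equivalences of orbits
  have hψ : ∀ ω : QX, ∃ f : MulAction.orbit G ω.out ≃ MulAction.orbit G (e ω).out,
      ∀ (g : G) (y : MulAction.orbit G ω.out), f (g • y) = g • f y := by
    intro ω
    have hrel : SubgroupQuotRel G (MulAction.stabilizer G ω.out)
        (MulAction.stabilizer G (e ω).out) := Quotient.exact (hτ ω).symm
    have h1 : OrbitIsoTo G (MulAction.stabilizer G (e ω).out) ω.out :=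
      (orbitIsoTo_iff_rel _ _).2 hrel
    obtain ⟨f, hf⟩ := h1
    refine ⟨f.trans (MulAction.orbitEquivQuotientStabilizer G (e ω).out).symm, fun g y => ?_⟩
    simp only [Equiv.trans_apply, hf]
    apply (MulAction.orbitEquivQuotientStabilizer G (e ω).out).injective
    rw [Equiv.apply_symm_apply, orbitEquiv_equivariant, Equiv.apply_symm_apply]
  choose ψ hψeq using hψ
  -- the forward and backward maps
  have memX : ∀ x : X, x ∈ MulAction.orbit G (Quotient.mk (MulAction.orbitRel G X) x).out :=
    fun x => MulAction.mem_orbit_symm.1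
      (MulAction.orbitRel_apply.1 (Quotient.exact (Quotient.out_eq
        (Quotient.mk (MulAction.orbitRel G X) x))))
  have memY : ∀ y : Y, y ∈ MulAction.orbit G (Quotient.mk (MulAction.orbitRel G Y) y).out :=
    fun y => MulAction.mem_orbit_symm.1
      (MulAction.orbitRel_apply.1 (Quotient.exact (Quotient.out_eq
        (Quotient.mk (MulAction.orbitRel G Y) y))))
  set F : X → Y := fun x => (ψ (Quotient.mk (MulAction.orbitRel G X) x) ⟨x, memX x⟩ : _) with hF
  have memY' : ∀ x : X, F x ∈ MulAction.orbit G (e (Quotient.mk (MulAction.orbitRel G X) x)).out :=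
    fun x => (ψ (Quotient.mk (MulAction.orbitRel G X) x) ⟨x, memX x⟩).2
  have hclass : ∀ x : X, Quotient.mk (MulAction.orbitRel G Y) (F x)
      = e (Quotient.mk (MulAction.orbitRel G X) x) := by
    intro x
    rw [← Quotient.out_eq (e (Quotient.mk (MulAction.orbitRel G X) x))]
    exact Quotient.sound (memY' x)
  -- generalization lemma for F
  have hFgen : ∀ (x : X) (ω : QX) (hω : Quotient.mk (MulAction.orbitRel G X) x = ω)
      (hx : x ∈ MulAction.orbit G ω.out), F x = (ψ ω ⟨x, hx⟩ : _) := by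
    intro x ω hω hx
    subst hω
    rfl
  set Finv : Y → X := fun y =>
    ((ψ (e.symm (Quotient.mk (MulAction.orbitRel G Y) y))).symm
      ⟨y, by rw [Equiv.apply_symm_apply]; exact memY y⟩ : _) with hFinv
  have hFinvgen : ∀ (y : Y) (ω : QX) (hω : e.symm (Quotient.mk (MulAction.orbitRel G Y) y) = ω)
      (hy : y ∈ MulAction.orbit G (e ω).out), Finv y = ((ψ ω).symm ⟨y, hy⟩ : _) := by
    intro y ω hω hy
    subst hω
    rfl
  have memX' : ∀ y : Y, Finv y ∈
      MulAction.orbit G (e.symm (Quotient.mk (MulAction.orbitRel G Y) y)).out :=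
    fun y => ((ψ (e.symm (Quotient.mk (MulAction.orbitRel G Y) y))).symm _).2
  have hclass' : ∀ y : Y, Quotient.mk (MulAction.orbitRel G X) (Finv y)
      = e.symm (Quotient.mk (MulAction.orbitRel G Y) y) := by
    intro y
    rw [← Quotient.out_eq (e.symm (Quotient.mk (MulAction.orbitRel G Y) y))]
    exact Quotient.sound (memX' y)
  have hleft : Function.LeftInverse Finv F := by
    intro x
    have h1 : e.symm (Quotient.mk (MulAction.orbitRel G Y) (F x))
        = Quotient.mk (MulAction.orbitRel G X) x := by rw [hclass, Equiv.symm_apply_apply]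
    rw [hFinvgen (F x) _ h1 (memY' x)]
    have h2 : (⟨F x, memY' x⟩ : MulAction.orbit G (e (Quotient.mk (MulAction.orbitRel G X) x)).out)
        = ψ (Quotient.mk (MulAction.orbitRel G X) x) ⟨x, memX x⟩ := Subtype.ext rfl
    rw [h2, Equiv.symm_apply_apply]
  have hright : Function.RightInverse Finv F := by
    intro y
    have h1 : Quotient.mk (MulAction.orbitRel G X) (Finv y)
        = e.symm (Quotient.mk (MulAction.orbitRel G Y) y) := hclass' y
    have hy : y ∈ MulAction.orbit G (e (e.symm (Quotient.mk (MulAction.orbitRel G Y) y))).out := by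
      rw [Equiv.apply_symm_apply]; exact memY y
    rw [hFgen (Finv y) _ h1 (memX' y)]
    have h2 : (⟨Finv y, memX' y⟩ :
        MulAction.orbit G (e.symm (Quotient.mk (MulAction.orbitRel G Y) y)).out)
        = (ψ (e.symm (Quotient.mk (MulAction.orbitRel G Y) y))).symm ⟨y, hy⟩ := Subtype.ext rfl
    rw [h2]
    simp
  refine ⟨⟨F, Finv, hleft, hright⟩, ?_⟩
  intro g x
  show F (g • x) = g • F x
  have hω : Quotient.mk (MulAction.orbitRel G X) (g • x)
      = Quotient.mk (MulAction.orbitRel G X) x :=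
    Quotient.sound (MulAction.mem_orbit x g)
  have hgx : g • x ∈ MulAction.orbit G (Quotient.mk (MulAction.orbitRel G X) x).out :=
    (g • (⟨x, memX x⟩ : MulAction.orbit G (Quotient.mk (MulAction.orbitRel G X) x).out)).2
  rw [hFgen (g • x) _ hω hgx]
  have h2 : (⟨g • x, hgx⟩ : MulAction.orbit G (Quotient.mk (MulAction.orbitRel G X) x).out)
      = g • ⟨x, memX x⟩ := Subtype.ext rfl
  rw [h2, hψeq]
  rfl
end
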